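/- arXiv:2405.01716 — 6 statements merged into one kernel-verified Lean document; each statement's English description precedes it below -/
import Mathlib

section
/- Let X be a finite nonempty record space, Θ an output type, n ≥ 1, and let M : (Fin n → X) → PMF Θ be a mechanism. Fix a prior π : PMF X, a loss function ℓ : X → X → ℝ≥0, a threshold η ≥ 0, and γ ≥ 0. If M is (η, γ)-ReRo with respect to π and ℓ, then M is (η, n·γ)-BCDistReRo with respect to π and ℓ. -/
open scoped ENNReal NNReal BigOperators
open Function

/-- Probability that the output of a PMF lands in a set. -/
noncomputable def pmfPr {Θ : Type*} (p : PMF Θ) (S : Set Θ) : ℝ≥0∞ :=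
  p.toOuterMeasure S

/-- Probability weight of a dataset `D` under `n` i.i.d. draws from the prior `π`. -/
noncomputable def iidWeight {X : Type*} {n : ℕ} (π : PMF X) (D : Fin n → X) : ℝ≥0∞ :=
  ∏ i, π (D i)

/-- `(η, γ)`-reconstruction robustness (ReRo): for every coordinate `i`, every fixing
of the other `n-1` records, and every adversary `A`, the probability over the target
`z ~ π` placed at coordinate `i` and `θ ~ M(D[i ↦ z])` that `ℓ z (A θ) ≤ η`
is at most `γ`. -/
def ReRo {X Θ : Type*} [Fintype X] {n : ℕ} (M : (Fin n → X) → PMF Θ)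
    (π : PMF X) (ℓ : X → X → ℝ≥0) (η : ℝ≥0) (γ : ℝ≥0∞) : Prop :=
  ∀ (i : Fin n) (D : Fin n → X) (A : Θ → X),
    ∑ z : X, π z * pmfPr (M (Function.update D i z)) {θ | ℓ z (A θ) ≤ η} ≤ γ

/-- `(η, γ)`-best-case distributional reconstruction robustness (BCDistReRo):
for every adversary `A`, the probability over `D ~ π^n` and `θ ~ M(D)` that the
minimum over coordinates `i` of `ℓ (D i) (A θ)` is at most `η` is bounded by `γ`. -/
def BCDistReRo {X Θ : Type*} [Fintype X] {n : ℕ} (M : (Fin n → X) → PMF Θ)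
    (π : PMF X) (ℓ : X → X → ℝ≥0) (η : ℝ≥0) (γ : ℝ≥0∞) : Prop :=
  ∀ A : Θ → X,
    ∑ D : Fin n → X, iidWeight π D * pmfPr (M D) {θ | ∃ i, ℓ (D i) (A θ) ≤ η} ≤ γ

/-- `(η, γ)`-average distributional reconstruction robustness (AvgDistReRo):
for every adversary `A`, the probability over `D ~ π^n`, `θ ~ M(D)`, and a uniformly
random index `i` that `ℓ (D i) (A θ) ≤ η` is at most `γ`. -/
def AvgDistReRo {X Θ : Type*} [Fintype X] {n : ℕ} (M : (Fin n → X) → PMF Θ)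
    (π : PMF X) (ℓ : X → X → ℝ≥0) (η : ℝ≥0) (γ : ℝ≥0∞) : Prop :=
  ∀ A : Θ → X,
    (n : ℝ≥0∞)⁻¹ * ∑ i : Fin n, ∑ D : Fin n → X,
      iidWeight π D * pmfPr (M D) {θ | ℓ (D i) (A θ) ≤ η} ≤ γ

/-- `ε`-differential privacy: on any pair of datasets differing in at most one
coordinate, the output distributions differ multiplicatively by at most `exp ε`. -/
def DiffPrivate {X Θ : Type*} {n : ℕ} (M : (Fin n → X) → PMF Θ) (ε : ℝ) : Prop :=
  ∀ x x' : Fin n → X, (∃ i : Fin n, ∀ j : Fin n, j ≠ i → x j = x' j) →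
    ∀ S : Set Θ, pmfPr (M x) S ≤ ENNReal.ofReal (Real.exp ε) * pmfPr (M x') S

/-- The baseline error `κ_{π,ℓ}(η) = sup_{z0} Pr_{x ~ π}[ℓ(x, z0) ≤ η]`. -/
noncomputable def baseline {X : Type*} (π : PMF X) (ℓ : X → X → ℝ≥0) (η : ℝ≥0) : ℝ≥0∞ :=
  ⨆ z0 : X, pmfPr π {x | ℓ x z0 ≤ η}

/-- If `M` is `(η, γ)`-ReRo w.r.t. `π` and `ℓ`, then `M` is
`(η, n·γ)`-BCDistReRo w.r.t. `π` and `ℓ`. -/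
theorem rero_to_bcdistrero {X Θ : Type*} [Fintype X] [Nonempty X] {n : ℕ} (hn : 1 ≤ n)
    (M : (Fin n → X) → PMF Θ) (π : PMF X) (ℓ : X → X → ℝ≥0) (η : ℝ≥0) (γ : ℝ≥0∞)
    (hM : ReRo M π ℓ η γ) :
    BCDistReRo M π ℓ η ((n : ℝ≥0∞) * γ) := by
  intro A
  -- union bound on the event
  have hub : ∀ D : Fin n → X,
      pmfPr (M D) {θ | ∃ i, ℓ (D i) (A θ) ≤ η} ≤
        ∑ i : Fin n, pmfPr (M D) {θ | ℓ (D i) (A θ) ≤ η} := by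
    intro D
    have h1 : {θ | ∃ i, ℓ (D i) (A θ) ≤ η} = ⋃ i, {θ | ℓ (D i) (A θ) ≤ η} := by
      ext θ; simp
    rw [pmfPr, h1]
    refine (MeasureTheory.measure_iUnion_le _).trans_eq ?_
    rw [tsum_fintype]; rfl
  calc ∑ D : Fin n → X, iidWeight π D * pmfPr (M D) {θ | ∃ i, ℓ (D i) (A θ) ≤ η}
      ≤ ∑ D : Fin n → X, iidWeight π D *
          ∑ i : Fin n, pmfPr (M D) {θ | ℓ (D i) (A θ) ≤ η} := by
        exact Finset.sum_le_sum fun D _ => mul_le_mul_right (hub D) _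
    _ = ∑ i : Fin n, ∑ D : Fin n → X,
          iidWeight π D * pmfPr (M D) {θ | ℓ (D i) (A θ) ≤ η} := by
        rw [Finset.sum_comm]
        exact Finset.sum_congr rfl fun D _ => Finset.mul_sum _ _ _
    _ ≤ ∑ _i : Fin n, γ := by
        refine Finset.sum_le_sum fun i _ => ?_
        -- reindex datasets via splitting coordinate i
        have hsum : ∑ D : Fin n → X, iidWeight π D * pmfPr (M D) {θ | ℓ (D i) (A θ) ≤ η}
            = ∑ p : X × ({ j // j ≠ i } → X),
                iidWeight π ((Equiv.funSplitAt i X).symm p) * pmfPr (M ((Equiv.funSplitAt i X).symm p)) {θ | ℓ (((Equiv.funSplitAt i X).symm p) i) (A θ) ≤ η} := by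
          exact (Equiv.sum_comp (Equiv.funSplitAt i X).symm _).symm
        rw [hsum, Fintype.sum_prod_type_right]
        -- for each g, the inner sum over z is an instance of ReRo
        have key : ∀ g : { j // j ≠ i } → X,
            ∑ z : X, iidWeight π ((Equiv.funSplitAt i X).symm (z, g)) *
              pmfPr (M ((Equiv.funSplitAt i X).symm (z, g))) {θ | ℓ (((Equiv.funSplitAt i X).symm (z, g)) i) (A θ) ≤ η}
            ≤ (∏ j' : { j // j ≠ i }, (π (g j') : ℝ≥0∞)) * γ := by
          intro g
          set Dg : Fin n → X := (Equiv.funSplitAt i X).symm (Classical.arbitrary X, g) with hDg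
          have hupd : ∀ z : X, (Equiv.funSplitAt i X).symm (z, g) = Function.update Dg i z := by
            intro z; funext j
            by_cases h : j = i
            · subst h; simp
            · simp [Dg, h, Function.update_of_ne h]
          have hat : ∀ z : X, ((Equiv.funSplitAt i X).symm (z, g)) i = z := by
            intro z; rw [hupd]; simp
          have hw : ∀ z : X, iidWeight π ((Equiv.funSplitAt i X).symm (z, g))
              = π z * ∏ j' : { j // j ≠ i }, (π (g j') : ℝ≥0∞) := by
            intro z
            rw [hupd]
            unfold iidWeight
            rw [← Finset.mul_prod_erase Finset.univ _ (Finset.mem_univ i)]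
            congr 1
            · simp
            · rw [Finset.prod_subtype (p := fun j => j ≠ i) (Finset.univ.erase i)
                (fun j => by simp [Finset.mem_erase]) (fun j => (π (Function.update Dg i z j) : ℝ≥0∞))]
              refine Finset.prod_congr rfl fun j _ => ?_
              rw [Function.update_of_ne j.2]
              congr 1
              simp [Dg, j.2]
          calc ∑ z : X, iidWeight π ((Equiv.funSplitAt i X).symm (z, g)) *
                  pmfPr (M ((Equiv.funSplitAt i X).symm (z, g))) {θ | ℓ (((Equiv.funSplitAt i X).symm (z, g)) i) (A θ) ≤ η}
              = (∏ j' : { j // j ≠ i }, (π (g j') : ℝ≥0∞)) *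
                  ∑ z : X, π z * pmfPr (M (Function.update Dg i z)) {θ | ℓ z (A θ) ≤ η} := by
                rw [Finset.mul_sum]
                refine Finset.sum_congr rfl fun z _ => ?_
                rw [hw z, hat z, hupd z]; ring
            _ ≤ (∏ j' : { j // j ≠ i }, (π (g j') : ℝ≥0∞)) * γ :=
                mul_le_mul_right (hM i Dg A) _
        calc ∑ g : { j // j ≠ i } → X, ∑ z : X, iidWeight π ((Equiv.funSplitAt i X).symm (z, g)) *
                pmfPr (M ((Equiv.funSplitAt i X).symm (z, g))) {θ | ℓ (((Equiv.funSplitAt i X).symm (z, g)) i) (A θ) ≤ η}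
            ≤ ∑ g : { j // j ≠ i } → X, (∏ j' : { j // j ≠ i }, (π (g j') : ℝ≥0∞)) * γ :=
              Finset.sum_le_sum fun g _ => key g
          _ = γ := by
              rw [← Finset.sum_mul, ← Fintype.piFinset_univ, ← Finset.prod_univ_sum]
              have h1 : ∑ x : X, (π x : ℝ≥0∞) = 1 := by
                exact (tsum_fintype _).symm.trans π.tsum_coe
              simp [h1]
    _ = (n : ℝ≥0∞) * γ := by simp [Finset.sum_const, mul_comm]
end

section
/- Let X be a finite nonempty record space, Θ an output type, n ≥ 1, and let M : (Fin n → X) → PMF Θ be a mechanism. Fix a prior π : PMF X, a loss function ℓ : X → X → ℝ≥0, a threshold η ≥ 0, and let κ = sup_{z0 ∈ X} Pr_{x ~ π}[ℓ(x, z0) ≤ η] be the baseline error. If M is ε-differentially private, then M is (η, γ)-BCDistReRo with respect to π and ℓ for γ = n · exp(ε) · κ. -/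
open scoped ENNReal NNReal BigOperators
open Function

/-- Core lemma: averaging over the target `z ~ π`, for any single PMF `p`,
the probability of reconstruction is at most the baseline. -/
lemma core_le_baseline {X Θ : Type*} [Fintype X] (π : PMF X) (ℓ : X → X → ℝ≥0)
    (η : ℝ≥0) (p : PMF Θ) (A : Θ → X) :
    ∑ z : X, π z * pmfPr p {θ | ℓ z (A θ) ≤ η} ≤ baseline π ℓ η := by
  classical
  have h1 : ∀ z : X, π z * pmfPr p {θ | ℓ z (A θ) ≤ η}
      = ∑' θ : Θ, p θ * Set.indicator {x | ℓ x (A θ) ≤ η} π z := by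
    intro z
    rw [pmfPr, PMF.toOuterMeasure_apply, ← ENNReal.tsum_mul_left]
    congr 1; funext θ
    by_cases h : ℓ z (A θ) ≤ η <;>
      simp [Set.indicator, h, mul_comm]
  calc ∑ z : X, π z * pmfPr p {θ | ℓ z (A θ) ≤ η}
      = ∑ z : X, ∑' θ : Θ, p θ * Set.indicator {x | ℓ x (A θ) ≤ η} π z := by
        exact Finset.sum_congr rfl fun z _ => h1 z
    _ = ∑' θ : Θ, ∑ z : X, p θ * Set.indicator {x | ℓ x (A θ) ≤ η} π z := by
        simp_rw [← tsum_fintype (L := SummationFilter.unconditional _)]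
        exact ENNReal.tsum_comm
    _ = ∑' θ : Θ, p θ * pmfPr π {x | ℓ x (A θ) ≤ η} := by
        refine tsum_congr fun θ => ?_
        rw [← Finset.mul_sum, pmfPr, PMF.toOuterMeasure_apply, tsum_fintype]
    _ ≤ ∑' θ : Θ, p θ * baseline π ℓ η := by
        refine ENNReal.tsum_le_tsum fun θ => ?_
        exact mul_le_mul_right (le_iSup (fun z0 => pmfPr π {x | ℓ x z0 ≤ η}) (A θ)) _
    _ = baseline π ℓ η := by rw [ENNReal.tsum_mul_right, p.tsum_coe, one_mul]

section PerCoord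

variable {X Θ : Type*} [Fintype X] [Nonempty X] {n : ℕ}
  {M : (Fin n → X) → PMF Θ} {π : PMF X} {ℓ : X → X → ℝ≥0} {η : ℝ≥0} {ε : ℝ}

lemma weight_sum_one {κ : Type*} [Fintype κ] [DecidableEq κ] (π : PMF X) :
    ∑ g : κ → X, ∏ j, π (g j) = 1 := by
  classical
  have hπ : ∑ x : X, π x = 1 := by
    have := π.tsum_coe; rwa [tsum_fintype] at this
  calc ∑ g : κ → X, ∏ j, π (g j)
      = ∑ g ∈ Fintype.piFinset (fun _ : κ => Finset.univ), ∏ j, π (g j) := by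
        rw [Fintype.piFinset_univ]
    _ = ∏ _j : κ, ∑ x : X, π x := Finset.sum_prod_piFinset _ _
    _ = 1 := by simp [hπ]

lemma perCoord (hM : DiffPrivate M ε) (A : Θ → X) (i : Fin n) :
    ∑ D : Fin n → X, iidWeight π D * pmfPr (M D) {θ | ℓ (D i) (A θ) ≤ η}
      ≤ ENNReal.ofReal (Real.exp ε) * baseline π ℓ η := by
  classical
  obtain ⟨x0⟩ := (inferInstance : Nonempty X)
  set e := Equiv.funSplitAt i X with he
  have hsymm : ∀ (z : X) (g : {j : Fin n // j ≠ i} → X) (j : Fin n),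
      e.symm (z, g) j = if h : j = i then z else g ⟨j, h⟩ := by
    intro z g j; simp [he]
  have hi : ∀ (z : X) (g : {j : Fin n // j ≠ i} → X), e.symm (z, g) i = z := by
    intro z g; rw [hsymm]; simp
  have hupd : ∀ (z : X) (g : {j : Fin n // j ≠ i} → X),
      Function.update (e.symm (z, g)) i x0 = e.symm (x0, g) := by
    intro z g; funext j
    by_cases h : j = i
    · subst h; simp [hsymm]
    · rw [Function.update_of_ne h, hsymm, hsymm, dif_neg h, dif_neg h]
  have hw : ∀ (z : X) (g : {j : Fin n // j ≠ i} → X),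
      iidWeight π (e.symm (z, g)) = π z * ∏ j : {j : Fin n // j ≠ i}, π (g j) := by
    intro z g
    rw [iidWeight, Finset.prod_eq_mul_prod_sdiff_singleton_of_mem (Finset.mem_univ i)
      (fun j => π (e.symm (z, g) j)), hi]
    congr 1
    rw [Finset.prod_subtype (Finset.univ \ {i}) (p := fun j => j ≠ i) (by simp)
      (fun j => π (e.symm (z, g) j))]
    exact Finset.prod_congr rfl fun j _ => by rw [hsymm, dif_neg j.2]
  -- DP step
  have hdp : ∀ D : Fin n → X,
      pmfPr (M D) {θ | ℓ (D i) (A θ) ≤ η}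
        ≤ ENNReal.ofReal (Real.exp ε) *
            pmfPr (M (Function.update D i x0)) {θ | ℓ (D i) (A θ) ≤ η} := by
    intro D
    exact hM D (Function.update D i x0)
      ⟨i, fun j hj => (Function.update_of_ne hj _ _).symm⟩ _
  calc ∑ D : Fin n → X, iidWeight π D * pmfPr (M D) {θ | ℓ (D i) (A θ) ≤ η}
      ≤ ∑ D : Fin n → X, iidWeight π D * (ENNReal.ofReal (Real.exp ε) *
          pmfPr (M (Function.update D i x0)) {θ | ℓ (D i) (A θ) ≤ η}) :=
        Finset.sum_le_sum fun D _ => mul_le_mul_right (hdp D) _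
    _ = ENNReal.ofReal (Real.exp ε) * ∑ D : Fin n → X, iidWeight π D *
          pmfPr (M (Function.update D i x0)) {θ | ℓ (D i) (A θ) ≤ η} := by
        rw [Finset.mul_sum]; exact Finset.sum_congr rfl fun D _ => by ring
    _ ≤ ENNReal.ofReal (Real.exp ε) * baseline π ℓ η := by
        refine mul_le_mul_right ?_ _
        calc ∑ D : Fin n → X, iidWeight π D *
              pmfPr (M (Function.update D i x0)) {θ | ℓ (D i) (A θ) ≤ η}
            = ∑ p : X × ({j : Fin n // j ≠ i} → X), iidWeight π (e.symm p) *
                pmfPr (M (Function.update (e.symm p) i x0))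
                  {θ | ℓ (e.symm p i) (A θ) ≤ η} :=
              (Equiv.sum_comp e.symm _).symm
          _ = ∑ g : {j : Fin n // j ≠ i} → X, (∏ j, π (g j)) *
                ∑ z : X, π z * pmfPr (M (e.symm (x0, g))) {θ | ℓ z (A θ) ≤ η} := by
              rw [Fintype.sum_prod_type]
              rw [Finset.sum_comm]
              refine Finset.sum_congr rfl fun g _ => ?_
              rw [Finset.mul_sum]
              refine Finset.sum_congr rfl fun z _ => ?_
              rw [hw, hupd, hi]; ring
          _ ≤ ∑ g : {j : Fin n // j ≠ i} → X, (∏ j, π (g j)) * baseline π ℓ η :=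
              Finset.sum_le_sum fun g _ =>
                mul_le_mul_right (core_le_baseline π ℓ η (M (e.symm (x0, g))) A) _
          _ = baseline π ℓ η := by
              rw [← Finset.sum_mul, weight_sum_one, one_mul]

end PerCoord

/-- If `M` is `ε`-differentially private, then `M` is
`(η, n · exp ε · κ)`-BCDistReRo, where `κ` is the baseline error. -/
theorem dp_to_bcdistrero {X Θ : Type*} [Fintype X] [Nonempty X] {n : ℕ} (hn : 1 ≤ n)
    (M : (Fin n → X) → PMF Θ) (π : PMF X) (ℓ : X → X → ℝ≥0) (η : ℝ≥0) (ε : ℝ)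
    (hM : DiffPrivate M ε) :
    BCDistReRo M π ℓ η ((n : ℝ≥0∞) * ENNReal.ofReal (Real.exp ε) * baseline π ℓ η) := by
  classical
  intro A
  -- union bound
  have hub : ∀ D : Fin n → X, pmfPr (M D) {θ | ∃ i, ℓ (D i) (A θ) ≤ η}
      ≤ ∑ i : Fin n, pmfPr (M D) {θ | ℓ (D i) (A θ) ≤ η} := by
    intro D
    have : {θ | ∃ i, ℓ (D i) (A θ) ≤ η} = ⋃ i : Fin n, {θ | ℓ (D i) (A θ) ≤ η} := by
      ext θ; simp [Set.mem_iUnion]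
    rw [pmfPr, this]
    simpa [pmfPr] using
      MeasureTheory.measure_iUnion_fintype_le (M D).toOuterMeasure
        (fun i => {θ | ℓ (D i) (A θ) ≤ η})
  calc ∑ D : Fin n → X, iidWeight π D * pmfPr (M D) {θ | ∃ i, ℓ (D i) (A θ) ≤ η}
      ≤ ∑ D : Fin n → X, iidWeight π D *
          ∑ i : Fin n, pmfPr (M D) {θ | ℓ (D i) (A θ) ≤ η} :=
        Finset.sum_le_sum fun D _ => mul_le_mul_right (hub D) _
    _ = ∑ i : Fin n, ∑ D : Fin n → X,
          iidWeight π D * pmfPr (M D) {θ | ℓ (D i) (A θ) ≤ η} := by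
        simp_rw [Finset.mul_sum]; exact Finset.sum_comm
    _ ≤ ∑ _i : Fin n, ENNReal.ofReal (Real.exp ε) * baseline π ℓ η :=
        Finset.sum_le_sum fun i _ => perCoord hM A i
    _ = (n : ℝ≥0∞) * ENNReal.ofReal (Real.exp ε) * baseline π ℓ η := by
        simp [Finset.sum_const, mul_assoc]
end

section
/- Let X be a finite nonempty record space, Θ an output type, n ≥ 1, and let M : (Fin n → X) → PMF Θ be a mechanism. Fix a prior π : PMF X, a loss function ℓ : X → X → ℝ≥0, a threshold η ≥ 0, and let κ = sup_{z0 ∈ X} Pr_{x ~ π}[ℓ(x, z0) ≤ η] be the baseline error. If M is ε-differentially private, then M is (η, γ)-ReRo with respect to π and ℓ for γ = exp(ε) · κ. -/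
open scoped ENNReal NNReal BigOperators
open Function

/-- If `M` is `ε`-differentially private, then `M` is
`(η, exp ε · κ)`-ReRo, where `κ` is the baseline error. -/
theorem dp_to_rero {X Θ : Type*} [Fintype X] [Nonempty X] {n : ℕ} (hn : 1 ≤ n)
    (M : (Fin n → X) → PMF Θ) (π : PMF X) (ℓ : X → X → ℝ≥0) (η : ℝ≥0) (ε : ℝ)
    (hM : DiffPrivate M ε) :
    ReRo M π ℓ η (ENNReal.ofReal (Real.exp ε) * baseline π ℓ η) := by
  intro i D A
  have hstep : ∀ z : X, pmfPr (M (Function.update D i z)) {θ | ℓ z (A θ) ≤ η}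
      ≤ ENNReal.ofReal (Real.exp ε) * pmfPr (M D) {θ | ℓ z (A θ) ≤ η} := fun z =>
    hM _ D ⟨i, fun j hj => Function.update_of_ne hj _ _⟩ _
  have hκ : ∀ θ : Θ, (∑ z : X, if ℓ z (A θ) ≤ η then π z else 0) ≤ baseline π ℓ η := by
    intro θ
    have h1 : pmfPr π {x | ℓ x (A θ) ≤ η} = ∑ z : X, if ℓ z (A θ) ≤ η then π z else 0 := by
      rw [pmfPr, PMF.toOuterMeasure_apply, tsum_fintype]
      simp [Set.indicator_apply]
    calc (∑ z : X, if ℓ z (A θ) ≤ η then π z else 0)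
        = pmfPr π {x | ℓ x (A θ) ≤ η} := h1.symm
      _ ≤ baseline π ℓ η := le_iSup (fun z0 => pmfPr π {x | ℓ x z0 ≤ η}) (A θ)
  have h2 : ∑ z : X, π z * pmfPr (M D) {θ | ℓ z (A θ) ≤ η} ≤ baseline π ℓ η := by
    have heq : ∑ z : X, π z * pmfPr (M D) {θ | ℓ z (A θ) ≤ η}
        = ∑' θ : Θ, (M D) θ * ∑ z : X, (if ℓ z (A θ) ≤ η then π z else 0) := by
      simp_rw [pmfPr, PMF.toOuterMeasure_apply, ← ENNReal.tsum_mul_left, ← tsum_fintype (L := SummationFilter.unconditional _)]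
      rw [ENNReal.tsum_comm]
      congr 1; funext θ
      rw [tsum_fintype, tsum_fintype, Finset.mul_sum]
      refine Finset.sum_congr rfl fun z _ => ?_
      simp [Set.indicator_apply, mul_comm]
    rw [heq]
    calc ∑' θ : Θ, (M D) θ * ∑ z : X, (if ℓ z (A θ) ≤ η then π z else 0)
        ≤ ∑' θ : Θ, (M D) θ * baseline π ℓ η :=
          ENNReal.tsum_le_tsum fun θ => mul_le_mul_right (hκ θ) _
      _ = baseline π ℓ η := by rw [ENNReal.tsum_mul_right, (M D).tsum_coe, one_mul]
  calc ∑ z : X, π z * pmfPr (M (Function.update D i z)) {θ | ℓ z (A θ) ≤ η}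
      ≤ ∑ z : X, π z * (ENNReal.ofReal (Real.exp ε) * pmfPr (M D) {θ | ℓ z (A θ) ≤ η}) :=
        Finset.sum_le_sum fun z _ => mul_le_mul_right (hstep z) _
    _ = ENNReal.ofReal (Real.exp ε) * ∑ z : X, π z * pmfPr (M D) {θ | ℓ z (A θ) ≤ η} := by
        rw [Finset.mul_sum]; exact Finset.sum_congr rfl fun z _ => mul_left_comm _ _ _
    _ ≤ ENNReal.ofReal (Real.exp ε) * baseline π ℓ η := mul_le_mul_right h2 _
end

section
/- For every n ≥ 2 and k ≥ 1 there exist a mechanism M : (Fin n → X) → PMF Θ with record space X = (Fin k → Bool), output space Θ = Option X, the uniform prior π on X, and the exact-match loss ℓ(x, z) = (0 if x = z, else 1) with threshold η = 0, such that: (a) M is (0, 1/2^k + n/2^{(n−1)k})-AvgDistReRo with respect to π and ℓ, but (b) M is not (0, γ)-ReRo with respect to π and ℓ for any γ < 1. -/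
open scoped ENNReal NNReal BigOperators
open Function

lemma sum_prod_swap {n : ℕ} {X : Type*} [Fintype X] (f : Fin n → X → ℝ≥0∞) :
    ∑ D : Fin n → X, ∏ j, f j (D j) = ∏ j, ∑ x, f j x := by
  rw [Finset.prod_univ_sum, Fintype.piFinset_univ]


/-- For every `n ≥ 2` and `k ≥ 1` there exists a mechanism on
`k`-bit records that is `(0, 1/2^k + n/2^{(n-1)k})`-AvgDistReRo w.r.t. the uniform
prior and exact-match loss, but is not `(0, γ)`-ReRo for any `γ < 1`. -/
theorem avgdistrero_not_rero_separation (n k : ℕ) (hn : 2 ≤ n) (hk : 1 ≤ k) :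
    ∃ M : (Fin n → (Fin k → Bool)) → PMF (Option (Fin k → Bool)),
      AvgDistReRo M (PMF.uniformOfFintype (Fin k → Bool))
        (fun x z => if x = z then 0 else 1) 0
        (1 / 2 ^ k + (n : ℝ≥0∞) / 2 ^ ((n - 1) * k))
      ∧ ∀ γ : ℝ≥0∞, γ < 1 →
          ¬ ReRo M (PMF.uniformOfFintype (Fin k → Bool))
              (fun x z => if x = z then 0 else 1) 0 γ := by
  classical
  set X := Fin k → Bool with hX
  set π := PMF.uniformOfFintype X with hπ
  haveI : NeZero n := ⟨by omega⟩
  set c : X := fun _ => false with hc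
  set M : (Fin n → X) → PMF (Option X) :=
    fun D => PMF.pure (if ∀ j : Fin n, j ≠ 0 → D j = c then some (D 0) else none) with hM
  have hcard : (Fintype.card X : ℝ≥0∞) = 2 ^ k := by
    simp [hX, Fintype.card_fun]
  have hπx : ∀ x : X, π x = (2 ^ k : ℝ≥0∞)⁻¹ := by
    intro x; rw [hπ, PMF.uniformOfFintype_apply, hcard]
  have h2k : (2 ^ k : ℝ≥0∞) ≠ 0 := by positivity
  have h2ktop : (2 ^ k : ℝ≥0∞) ≠ ⊤ := ENNReal.pow_ne_top (by norm_num)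
  have hsumπ : ∑ x : X, π x = 1 := by
    simp only [hπx, Finset.sum_const, Finset.card_univ, nsmul_eq_mul, hcard]
    exact ENNReal.mul_inv_cancel h2k h2ktop
  refine ⟨M, ?_, ?_⟩
  · -- AvgDistReRo
    intro A
    set B : ℝ≥0∞ := (2 ^ k : ℝ≥0∞)⁻¹ + ((2 ^ k : ℝ≥0∞)⁻¹) ^ (n - 1) with hB
    have sum1 : ∀ (i : Fin n) (a : X),
        ∑ D : Fin n → X, iidWeight π D * (if D i = a then (1:ℝ≥0∞) else 0)
          = (2 ^ k : ℝ≥0∞)⁻¹ := by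
      intro i a
      have h1 : ∀ D : Fin n → X,
          iidWeight π D * (if D i = a then (1:ℝ≥0∞) else 0)
          = ∏ j, (fun (j : Fin n) (x : X) =>
              π x * (if j = i then (if x = a then (1:ℝ≥0∞) else 0) else 1)) j (D j) := by
        intro D
        rw [Finset.prod_mul_distrib]
        simp only [Finset.prod_ite_eq' Finset.univ i, Finset.mem_univ, if_true]
        rfl
      rw [Finset.sum_congr rfl fun D _ => h1 D,
        sum_prod_swap (fun (j : Fin n) (x : X) =>
          π x * (if j = i then (if x = a then (1:ℝ≥0∞) else 0) else 1))]
      have h2 : ∀ j : Fin n, (∑ x : X, π x * (if j = i then (if x = a then (1:ℝ≥0∞) else 0) else 1))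
          = if j = i then (2 ^ k : ℝ≥0∞)⁻¹ else 1 := by
        intro j
        by_cases hj : j = i
        · simp only [hj, if_true, mul_ite, mul_one, mul_zero, Finset.sum_ite_eq',
            Finset.mem_univ, if_true]
          rw [Finset.sum_eq_single a (fun b _ hb => if_neg hb) (fun h => absurd (Finset.mem_univ _) h), if_pos rfl]
          exact hπx a
        · simp [hj, hsumπ]
      rw [Finset.prod_congr rfl fun j _ => h2 j]
      simp [Finset.prod_ite_eq' Finset.univ i]
    have sum2 :
        ∑ D : Fin n → X, iidWeight π D * (if ∀ j : Fin n, j ≠ 0 → D j = c then (1:ℝ≥0∞) else 0)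
          = ((2 ^ k : ℝ≥0∞)⁻¹) ^ (n - 1) := by
      have h1 : ∀ D : Fin n → X,
          iidWeight π D * (if ∀ j : Fin n, j ≠ 0 → D j = c then (1:ℝ≥0∞) else 0)
          = ∏ j, (fun (j : Fin n) (x : X) =>
              π x * (if j ≠ 0 → x = c then (1:ℝ≥0∞) else 0)) j (D j) := by
        intro D
        rw [Finset.prod_mul_distrib, Finset.prod_boole]
        simp only [Finset.mem_univ, true_implies]
        rfl
      rw [Finset.sum_congr rfl fun D _ => h1 D,
        sum_prod_swap (fun (j : Fin n) (x : X) =>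
          π x * (if j ≠ 0 → x = c then (1:ℝ≥0∞) else 0))]
      have h2 : ∀ j : Fin n, (∑ x : X, π x * (if j ≠ 0 → x = c then (1:ℝ≥0∞) else 0))
          = if j = 0 then 1 else (2 ^ k : ℝ≥0∞)⁻¹ := by
        intro j
        by_cases hj : j = 0
        · simp [hj, hsumπ]
        · simp only [hj, if_false]
          have : ∀ x : X, (if j ≠ 0 → x = c then (1:ℝ≥0∞) else 0) = if x = c then 1 else 0 := by
            intro x; simp [hj]
          rw [Finset.sum_congr rfl fun x _ => by rw [this x]]
          simp only [mul_ite, mul_one, mul_zero, Finset.sum_ite_eq', Finset.mem_univ, if_true]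
          rw [Finset.sum_eq_single c (fun b _ hb => if_neg hb) (fun h => absurd (Finset.mem_univ _) h), if_pos rfl]
          exact hπx c
      rw [Finset.prod_congr rfl fun j _ => h2 j, Finset.prod_ite, Finset.prod_const,
        Finset.prod_const, one_pow, one_mul]
      congr 1
      rw [Finset.filter_ne' Finset.univ (0 : Fin n), Finset.card_erase_of_mem (Finset.mem_univ _),
        Finset.card_univ, Fintype.card_fin]
    have key : ∀ i : Fin n,
        ∑ D : Fin n → X, iidWeight π D *
          pmfPr (M D) {θ | (fun (x z : X) => if x = z then (0:ℝ≥0) else 1) (D i) (A θ) ≤ 0} ≤ B := by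
      intro i
      have step1 : ∀ D : Fin n → X,
          iidWeight π D * pmfPr (M D)
            {θ | (fun (x z : X) => if x = z then (0:ℝ≥0) else 1) (D i) (A θ) ≤ 0}
          ≤ iidWeight π D * (if D i = A none then (1:ℝ≥0∞) else 0)
            + iidWeight π D * (if ∀ j : Fin n, j ≠ 0 → D j = c then (1:ℝ≥0∞) else 0) := by
        intro D
        simp only [hM, pmfPr, PMF.toOuterMeasure_pure_apply]
        by_cases htail : ∀ j : Fin n, j ≠ 0 → D j = c
        · calc iidWeight π D * _
              ≤ iidWeight π D * 1 := by
                gcongr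
                split_ifs <;> norm_num
            _ ≤ _ := by
                rw [if_pos htail, mul_one]
                exact le_add_self
        · rw [if_neg htail, if_neg htail, mul_zero, add_zero]
          have hmem : (none ∈ {θ : Option X | (fun (x z : X) => if x = z then (0:ℝ≥0) else 1) (D i) (A θ) ≤ 0})
              ↔ D i = A none := by
            by_cases h : D i = A none <;> simp [h]
          by_cases h : D i = A none
          · rw [if_pos (hmem.mpr h), if_pos h]
          · rw [if_neg (fun hh => h (hmem.mp hh)), if_neg h]
      calc ∑ D : Fin n → X, iidWeight π D *
            pmfPr (M D) {θ | (fun (x z : X) => if x = z then (0:ℝ≥0) else 1) (D i) (A θ) ≤ 0}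
          ≤ ∑ D : Fin n → X, (iidWeight π D * (if D i = A none then (1:ℝ≥0∞) else 0)
            + iidWeight π D * (if ∀ j : Fin n, j ≠ 0 → D j = c then (1:ℝ≥0∞) else 0)) :=
            Finset.sum_le_sum fun D _ => step1 D
        _ = _ + _ := Finset.sum_add_distrib
        _ = B := by rw [sum1 i (A none), sum2]
    calc (n : ℝ≥0∞)⁻¹ * ∑ i : Fin n, ∑ D : Fin n → X,
          iidWeight π D * pmfPr (M D)
            {θ | (fun (x z : X) => if x = z then (0:ℝ≥0) else 1) (D i) (A θ) ≤ 0}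
        ≤ (n : ℝ≥0∞)⁻¹ * ∑ _i : Fin n, B := by
          gcongr with i _
          exact key i
      _ = (n : ℝ≥0∞)⁻¹ * ((n : ℝ≥0∞) * B) := by
          rw [Finset.sum_const, Finset.card_univ, Fintype.card_fin, nsmul_eq_mul]
      _ = B := by
          rw [← mul_assoc, ENNReal.inv_mul_cancel (by exact_mod_cast (by omega : n ≠ 0)) (by simp), one_mul]
      _ ≤ 1 / 2 ^ k + (n : ℝ≥0∞) / 2 ^ ((n - 1) * k) := by
          rw [hB, one_div, div_eq_mul_inv]
          refine add_le_add le_rfl ?_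
          have hpow : ((2 : ℝ≥0∞) ^ k)⁻¹ ^ (n - 1) = ((2 : ℝ≥0∞) ^ ((n - 1) * k))⁻¹ := by
            rw [← ENNReal.inv_pow, ← pow_mul, mul_comm k (n - 1)]
          rw [hpow]
          exact le_mul_of_one_le_left (by positivity) (by exact_mod_cast (by omega : 1 ≤ n))
  · -- not ReRo
    intro γ hγ hR
    have h := hR 0 (fun _ => c) (fun θ => θ.getD c)
    have heq : ∀ z : X,
        pmfPr (M (Function.update (fun _ => c) (0 : Fin n) z))
          {θ | (fun (x z' : X) => if x = z' then (0:ℝ≥0) else 1) z ((fun θ => θ.getD c) θ) ≤ 0} = 1 := by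
      intro z
      have htail : ∀ j : Fin n, j ≠ 0 → (Function.update (fun _ => c) (0 : Fin n) z) j = c := by
        intro j hj; rw [Function.update_of_ne hj]
      have h0 : (Function.update (fun _ => c) (0 : Fin n) z) 0 = z := Function.update_self _ _ _
      simp only [hM, pmfPr, PMF.toOuterMeasure_pure_apply, if_pos htail, h0]
      rw [if_pos]
      simp [Set.mem_setOf_eq]
    rw [Finset.sum_congr rfl (fun z _ => by rw [heq z, mul_one]), hsumπ] at h
    exact absurd h (not_le.mpr hγ)
end

section
/- Let n ≥ 2, k ≥ 1, X = (Fin k → Bool), and let π be the uniform prior on X. Define the deterministic mechanism M : (Fin n → X) → PMF (Option X) by: M(D) = some (D_j) if there exists an index j such that D_i equals the all-false record for every i ≠ j (if all records are all-false, output the all-false record), and M(D) = none otherwise. Then for every adversary A : Option X → X, the probability over D ~ π^n, θ ~ M(D), and a uniformly random index i ∈ Fin n that A(θ) = D_i is at most 1/2^k + n/2^{(n−1)k}. -/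
open scoped ENNReal NNReal BigOperators
open Function

/-- The all-false (all-zero) record on `k` bits. -/
def zeroRec (k : ℕ) : Fin k → Bool := fun _ => false

/-- The separating deterministic mechanism: if there is an index `j` such that all
records other than `D j` are all-false, output `some (D j)` (when all records are
all-false this outputs the all-false record); otherwise output `none`. -/
noncomputable def sepMech (n k : ℕ) (D : Fin n → (Fin k → Bool)) :
    PMF (Option (Fin k → Bool)) :=
  if h : ∃ j : Fin n, ∀ i : Fin n, i ≠ j → D i = zeroRec k then
    PMF.pure (some (D h.choose))
  else
    PMF.pure none

lemma count_fix (n k : ℕ) (i : Fin n) (x₀ : Fin k → Bool) :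
    (Finset.univ.filter (fun D : Fin n → (Fin k → Bool) => x₀ = D i)).card
      ≤ 2 ^ ((n - 1) * k) := by
  classical
  have hcard : Fintype.card ({j : Fin n // j ≠ i} → (Fin k → Bool)) = 2 ^ ((n-1)*k) := by
    rw [Fintype.card_fun]
    have h1 : Fintype.card {j : Fin n // j ≠ i} = n - 1 := by
      have := Fintype.card_subtype_compl (fun j : Fin n => j = i)
      simpa [Fintype.card_subtype_eq] using this
    rw [h1, Fintype.card_fun]
    simp [pow_mul, mul_comm]
  have := Finset.card_le_card_of_injOn
    (f := fun (D : Fin n → (Fin k → Bool)) (j : {j : Fin n // j ≠ i}) => D j.val)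
    (s := Finset.univ.filter (fun D : Fin n → (Fin k → Bool) => x₀ = D i))
    (t := Finset.univ) (fun _ _ => Finset.mem_univ _) ?_
  · simpa [hcard] using this
  · intro D hD D' hD' hEq
    simp only [Finset.mem_coe, Finset.mem_filter, Finset.mem_univ, true_and] at hD hD'
    funext m
    by_cases hm : m = i
    · subst hm; rw [← hD, ← hD']
    · exact congrFun hEq ⟨m, hm⟩

lemma count_good (n k : ℕ) :
    (Finset.univ.filter (fun D : Fin n → (Fin k → Bool) =>
      ∃ j : Fin n, ∀ i : Fin n, i ≠ j → D i = zeroRec k)).card ≤ n * 2 ^ k := by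
  classical
  have hsub : (Finset.univ.filter (fun D : Fin n → (Fin k → Bool) =>
      ∃ j : Fin n, ∀ i : Fin n, i ≠ j → D i = zeroRec k))
      ⊆ Finset.univ.biUnion (fun j : Fin n =>
        Finset.univ.filter (fun D : Fin n → (Fin k → Bool) =>
          ∀ i : Fin n, i ≠ j → D i = zeroRec k)) := by
    intro D hD
    simp only [Finset.mem_filter, Finset.mem_univ, true_and] at hD
    obtain ⟨j, hj⟩ := hD
    exact Finset.mem_biUnion.mpr ⟨j, Finset.mem_univ j, by
      simp only [Finset.mem_filter, Finset.mem_univ, true_and]; exact hj⟩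
  calc (Finset.univ.filter _).card
      ≤ (Finset.univ.biUnion (fun j : Fin n =>
        Finset.univ.filter (fun D : Fin n → (Fin k → Bool) =>
          ∀ i : Fin n, i ≠ j → D i = zeroRec k))).card := Finset.card_le_card hsub
    _ ≤ ∑ j : Fin n, (Finset.univ.filter (fun D : Fin n → (Fin k → Bool) =>
          ∀ i : Fin n, i ≠ j → D i = zeroRec k)).card := Finset.card_biUnion_le
    _ ≤ ∑ _j : Fin n, 2 ^ k := by
        refine Finset.sum_le_sum fun j _ => ?_
        have := Finset.card_le_card_of_injOn
          (f := fun (D : Fin n → (Fin k → Bool)) => D j)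
          (s := Finset.univ.filter (fun D : Fin n → (Fin k → Bool) =>
            ∀ i : Fin n, i ≠ j → D i = zeroRec k))
          (t := Finset.univ) (fun _ _ => Finset.mem_univ _) ?_
        · simpa [Fintype.card_fun] using this
        · intro D hD D' hD' hEq
          simp only [Finset.mem_coe, Finset.mem_filter, Finset.mem_univ, true_and] at hD hD'
          funext m
          by_cases hm : m = j
          · subst hm; exact hEq
          · rw [hD m hm, hD' m hm]
    _ = n * 2 ^ k := by simp [Finset.sum_const, mul_comm]


/-- For the separating mechanism, every adversary's probability
(over `D ~ π^n`, `θ ~ M(D)`, and a uniform index `i`) of guessing `D i` exactly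
is at most `1/2^k + n/2^{(n-1)k}`. -/
theorem sepMech_avg_reconstruction_bound (n k : ℕ) (hn : 2 ≤ n) (hk : 1 ≤ k) :
    ∀ A : Option (Fin k → Bool) → (Fin k → Bool),
      (n : ℝ≥0∞)⁻¹ * ∑ i : Fin n, ∑ D : Fin n → (Fin k → Bool),
          iidWeight (PMF.uniformOfFintype (Fin k → Bool)) D *
            pmfPr (sepMech n k D) {θ | A θ = D i}
        ≤ 1 / 2 ^ k + (n : ℝ≥0∞) / 2 ^ ((n - 1) * k) := by
  classical
  intro A
  set R : ℝ≥0∞ := 1 / 2 ^ k + (n : ℝ≥0∞) / 2 ^ ((n - 1) * k) with hR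
  -- the common weight of every dataset
  have hw : ∀ D : Fin n → (Fin k → Bool),
      iidWeight (PMF.uniformOfFintype (Fin k → Bool)) D = ((2 : ℝ≥0∞) ^ (k * n))⁻¹ := by
    intro D
    simp only [iidWeight, PMF.uniformOfFintype_apply]
    rw [Finset.prod_const, Finset.card_univ, Fintype.card_fin, ← ENNReal.inv_pow]
    congr 1
    have hc : ((Fintype.card (Fin k → Bool) : ℝ≥0∞)) = 2 ^ k := by
      simp [Fintype.card_fun]
    rw [hc, ← pow_mul]
  -- per-D bound on the mechanism probability
  have hD : ∀ (i : Fin n) (D : Fin n → (Fin k → Bool)),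
      pmfPr (sepMech n k D) {θ | A θ = D i}
        ≤ (if ∃ j : Fin n, ∀ i' : Fin n, i' ≠ j → D i' = zeroRec k then (1:ℝ≥0∞) else 0)
          + (if A none = D i then (1:ℝ≥0∞) else 0) := by
    intro i D
    by_cases h : ∃ j : Fin n, ∀ i' : Fin n, i' ≠ j → D i' = zeroRec k
    · simp only [pmfPr, sepMech, dif_pos h, if_pos h, PMF.toOuterMeasure_pure_apply]
      split_ifs <;> simp
    · simp only [pmfPr, sepMech, dif_neg h, if_neg h, PMF.toOuterMeasure_pure_apply,
        Set.mem_setOf_eq, zero_add]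
      split_ifs <;> simp_all [Set.mem_setOf_eq]
  -- per-coordinate bound
  have key : ∀ i : Fin n,
      ∑ D : Fin n → (Fin k → Bool),
          iidWeight (PMF.uniformOfFintype (Fin k → Bool)) D *
            pmfPr (sepMech n k D) {θ | A θ = D i} ≤ R := by
    intro i
    set w : ℝ≥0∞ := ((2 : ℝ≥0∞) ^ (k * n))⁻¹ with hwdef
    have h2k : (2 : ℝ≥0∞) ^ k ≠ 0 := by positivity
    have h2k' : (2 : ℝ≥0∞) ^ k ≠ ⊤ := by
      exact ENNReal.pow_ne_top (by norm_num)
    have hne : (2 : ℝ≥0∞) ^ ((n-1)*k) ≠ 0 := by positivity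
    have hnt : (2 : ℝ≥0∞) ^ ((n-1)*k) ≠ ⊤ := ENNReal.pow_ne_top (by norm_num)
    have hsplit : (2 : ℝ≥0∞) ^ (k * n) = 2 ^ ((n - 1) * k) * 2 ^ k := by
      rw [← pow_add]
      congr 1
      have h1 : n - 1 + 1 = n := by omega
      calc k * n = k * (n - 1 + 1) := by rw [h1]
        _ = (n - 1) * k + k := by ring
    calc ∑ D : Fin n → (Fin k → Bool),
          iidWeight (PMF.uniformOfFintype (Fin k → Bool)) D *
            pmfPr (sepMech n k D) {θ | A θ = D i}
        ≤ ∑ D : Fin n → (Fin k → Bool),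
            w * ((if ∃ j : Fin n, ∀ i' : Fin n, i' ≠ j → D i' = zeroRec k then (1:ℝ≥0∞) else 0)
              + (if A none = D i then (1:ℝ≥0∞) else 0)) := by
          refine Finset.sum_le_sum fun D _ => ?_
          rw [hw D]
          exact mul_le_mul_right (hD i D) _
      _ = w * ((Finset.univ.filter (fun D : Fin n → (Fin k → Bool) =>
              ∃ j : Fin n, ∀ i' : Fin n, i' ≠ j → D i' = zeroRec k)).card : ℝ≥0∞)
          + w * ((Finset.univ.filter (fun D : Fin n → (Fin k → Bool) =>
              A none = D i)).card : ℝ≥0∞) := by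
          rw [← Finset.mul_sum, Finset.sum_add_distrib, Finset.sum_boole, Finset.sum_boole,
            mul_add]
      _ ≤ w * ((n : ℝ≥0∞) * 2 ^ k) + w * (2 : ℝ≥0∞) ^ ((n - 1) * k) := by
          gcongr
          · exact_mod_cast count_good n k
          · exact_mod_cast count_fix n k i (A none)
      _ = R := by
          have e1 : ((2:ℝ≥0∞)^((n-1)*k))⁻¹ * ((2:ℝ≥0∞)^k)⁻¹ * ((n:ℝ≥0∞) * 2^k)
              = (n:ℝ≥0∞) / 2^((n-1)*k) := by
            rw [ENNReal.div_eq_inv_mul, mul_assoc, mul_left_comm ((2:ℝ≥0∞)^k)⁻¹,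
              ENNReal.inv_mul_cancel h2k h2k', mul_one]
          have e2 : ((2:ℝ≥0∞)^((n-1)*k))⁻¹ * ((2:ℝ≥0∞)^k)⁻¹ * (2:ℝ≥0∞)^((n-1)*k)
              = 1 / 2^k := by
            rw [one_div, mul_comm (((2:ℝ≥0∞)^((n-1)*k))⁻¹), mul_assoc,
              ENNReal.inv_mul_cancel hne hnt, mul_one]
          rw [hwdef, hsplit, ENNReal.mul_inv (Or.inl hne) (Or.inl hnt), e1, e2, hR, add_comm]
  have hn0 : (n : ℝ≥0∞) ≠ 0 := Nat.cast_ne_zero.mpr (by omega)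
  calc (n : ℝ≥0∞)⁻¹ * ∑ i : Fin n, ∑ D : Fin n → (Fin k → Bool),
          iidWeight (PMF.uniformOfFintype (Fin k → Bool)) D *
            pmfPr (sepMech n k D) {θ | A θ = D i}
      ≤ (n : ℝ≥0∞)⁻¹ * ∑ _i : Fin n, R :=
        mul_le_mul_right (Finset.sum_le_sum fun i _ => key i) _
    _ = (n : ℝ≥0∞)⁻¹ * ((n : ℝ≥0∞) * R) := by
        rw [Finset.sum_const, Finset.card_univ, Fintype.card_fin, nsmul_eq_mul]
    _ = R := by rw [← mul_assoc, ENNReal.inv_mul_cancel hn0 (ENNReal.natCast_ne_top n), one_mul]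
end

section
/- Let X be a finite nonempty record space, Θ an output type, n ≥ 1, and let M : (Fin n → X) → PMF Θ be any mechanism. Let π : PMF X be a prior and suppose there exists z0 ∈ X with π(z0) ≥ 1/n. Then for the exact-match loss ℓ(x, z) = (0 if x = z, else 1) with threshold η = 0, any γ for which M is (0, γ)-BCDistReRo with respect to π and ℓ satisfies γ ≥ 1 − (1 − 1/n)^n; in particular, the constant adversary A(θ) = z0 achieves Pr_{D ~ π^n}[∃ i, D_i = z0] = 1 − (1 − π(z0))^n ≥ 1 − (1 − 1/n)^n, regardless of the mechanism's output. -/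
open scoped ENNReal NNReal BigOperators
open Function

lemma pmfPr_univ {Θ : Type*} (p : PMF Θ) : pmfPr p Set.univ = 1 := by
  simp [pmfPr, PMF.toOuterMeasure_apply, PMF.tsum_coe]

lemma pmfPr_empty {Θ : Type*} (p : PMF Θ) : pmfPr p ∅ = 0 := by
  simp [pmfPr, PMF.toOuterMeasure_apply]

lemma sum_prod_comp {X : Type*} [Fintype X] {n : ℕ} (f : X → ℝ≥0∞) :
    ∑ D : Fin n → X, ∏ i, f (D i) = (∑ x : X, f x) ^ n := by
  have h := Finset.prod_univ_sum (fun _ : Fin n => (Finset.univ : Finset X)) (fun _ x => f x)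
  simpa [Fintype.piFinset_univ, Finset.prod_const, Finset.card_univ] using h.symm

lemma sum_compl_eq {X : Type*} [Fintype X] [DecidableEq X] (π : PMF X) (z0 : X) :
    (∑ x : X, if x = z0 then 0 else π x) = 1 - π z0 := by
  have h1 : (∑ x : X, π x) = 1 := by
    rw [← tsum_fintype (L := SummationFilter.unconditional X)]; exact π.tsum_coe
  have key : (∑ x : X, if x = z0 then 0 else π x) + π z0 = 1 := by
    rw [← h1, ← Finset.add_sum_erase Finset.univ π (Finset.mem_univ z0), add_comm]
    congr 1
    rw [show (∑ x ∈ Finset.univ.erase z0, π x)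
        = ∑ x ∈ Finset.univ.erase z0, (if x = z0 then 0 else π x) from
      Finset.sum_congr rfl fun x hx => by simp [Finset.ne_of_mem_erase hx]]
    exact (Finset.sum_erase Finset.univ (by simp)).symm
  exact ENNReal.eq_sub_of_add_eq (PMF.apply_ne_top π z0) key

/-- If some record `z0` has prior mass at least `1/n`, then any `γ` for
which `M` is `(0, γ)`-BCDistReRo w.r.t. `π` and the exact-match loss satisfies
`γ ≥ 1 - (1 - 1/n)^n`; in particular the constant adversary guessing `z0` matches
some record of `D ~ π^n` with probability exactly `1 - (1 - π z0)^n`, which is at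
least `1 - (1 - 1/n)^n`, regardless of the mechanism's output. -/
theorem bcdistrero_baseline_lower_bound {X Θ : Type*} [Fintype X] [Nonempty X]
    [DecidableEq X] {n : ℕ} (hn : 1 ≤ n)
    (M : (Fin n → X) → PMF Θ) (π : PMF X) (z0 : X) (hz : (n : ℝ≥0∞)⁻¹ ≤ π z0) :
    (∀ γ : ℝ≥0∞,
      BCDistReRo M π (fun x z => if x = z then 0 else 1) 0 γ →
        1 - (1 - (n : ℝ≥0∞)⁻¹) ^ n ≤ γ)
    ∧ (∑ D : Fin n → X, iidWeight π D * (if ∃ i, D i = z0 then 1 else 0))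
        = 1 - (1 - π z0) ^ n
    ∧ 1 - (1 - (n : ℝ≥0∞)⁻¹) ^ n ≤ 1 - (1 - π z0) ^ n := by
  classical
  set f : X → ℝ≥0∞ := fun x => if x = z0 then 0 else π x with hf
  have h1 : (∑ x : X, π x) = 1 := by rw [← tsum_fintype (L := SummationFilter.unconditional X)]; exact π.tsum_coe
  have htot : ∑ D : Fin n → X, iidWeight π D = 1 := by
    have := sum_prod_comp (n := n) (fun x : X => π x)
    simpa [iidWeight, h1] using this
  have hT : (∑ D : Fin n → X, ∏ i, f (D i)) = (1 - π z0) ^ n := by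
    rw [sum_prod_comp, hf, sum_compl_eq]
  have hpt : ∀ D : Fin n → X,
      iidWeight π D * (if ∃ i, D i = z0 then 0 else 1) = ∏ i, f (D i) := by
    intro D
    by_cases h : ∃ i, D i = z0
    · rw [if_pos h, mul_zero]
      obtain ⟨i, hi⟩ := h
      have h0 : f (D i) = 0 := by simp [hf, hi]
      exact (Finset.prod_eq_zero (Finset.mem_univ i) h0).symm
    · push_neg at h
      simp only [h, exists_false, if_neg]
      simp only [iidWeight, if_false, mul_one]
      exact Finset.prod_congr rfl fun i _ => by simp [hf, h i]
  have hTne : (1 - π z0) ^ n ≠ ⊤ :=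
    ENNReal.pow_ne_top ((lt_of_le_of_lt tsub_le_self ENNReal.one_lt_top).ne)
  have hsplit : (∑ D : Fin n → X, iidWeight π D * (if ∃ i, D i = z0 then 1 else 0))
      + (1 - π z0) ^ n = 1 := by
    calc (∑ D : Fin n → X, iidWeight π D * (if ∃ i, D i = z0 then 1 else 0))
          + (1 - π z0) ^ n
        = ∑ D : Fin n → X,
            (iidWeight π D * (if ∃ i, D i = z0 then 1 else 0) + ∏ i, f (D i)) := by
          rw [← hT, Finset.sum_add_distrib]
      _ = ∑ D : Fin n → X, iidWeight π D := Finset.sum_congr rfl fun D _ => by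
          rw [← hpt D, ← mul_add]
          by_cases h : ∃ i, D i = z0 <;> simp [h]
      _ = 1 := htot
  have h2 : (∑ D : Fin n → X, iidWeight π D * (if ∃ i, D i = z0 then 1 else 0))
      = 1 - (1 - π z0) ^ n := ENNReal.eq_sub_of_add_eq hTne hsplit
  have h3 : 1 - (1 - (n : ℝ≥0∞)⁻¹) ^ n ≤ 1 - (1 - π z0) ^ n := by
    refine tsub_le_tsub_left (pow_le_pow_left₀ zero_le ?_ n) 1
    exact tsub_le_tsub_left hz 1
  refine ⟨?_, h2, h3⟩
  intro γ hγ
  have := hγ (fun _ => z0)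
  have hset : ∀ D : Fin n → X,
      {θ : Θ | ∃ i, (if D i = z0 then (0:ℝ≥0) else 1) ≤ 0}
        = if ∃ i, D i = z0 then Set.univ else ∅ := by
    intro D
    have hiff : ∀ i : Fin n, ((if D i = z0 then (0:ℝ≥0) else 1) ≤ 0) ↔ D i = z0 := by
      intro i; split_ifs with h <;> simp [h]
    by_cases h : ∃ i, D i = z0
    · simp only [h, if_true]
      ext θ; simp only [Set.mem_setOf_eq, Set.mem_univ, iff_true]
      obtain ⟨i, hi⟩ := h; exact ⟨i, (hiff i).mpr hi⟩
    · simp only [h, if_false]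
      ext θ; simp only [Set.mem_setOf_eq, Set.mem_empty_iff_false, iff_false]
      rintro ⟨i, hi⟩; exact h ⟨i, (hiff i).mp hi⟩
  have heq : (∑ D : Fin n → X, iidWeight π D
        * pmfPr (M D) {θ | ∃ i, (if D i = z0 then (0:ℝ≥0) else 1) ≤ 0})
      = ∑ D : Fin n → X, iidWeight π D * (if ∃ i, D i = z0 then 1 else 0) := by
    refine Finset.sum_congr rfl fun D _ => ?_
    rw [hset D]
    by_cases h : ∃ i, D i = z0 <;> simp [h, pmfPr_univ, pmfPr_empty]
  calc 1 - (1 - (n : ℝ≥0∞)⁻¹) ^ n ≤ 1 - (1 - π z0) ^ n := h3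
    _ = ∑ D : Fin n → X, iidWeight π D * (if ∃ i, D i = z0 then 1 else 0) := h2.symm
    _ ≤ γ := by rw [← heq]; exact this
end
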